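/- Let n ≥ 2, let X ⊆ ℕ be a finite set and let P : [X]^2 → n be a colouring. For any m ∈ ℕ, the number of x ∈ X whose h.m.p.h. sequence σ_x has length at most m is at most n^m; that is, |{x ∈ X : |σ_x| ≤ m}| ≤ n^m. -/
import Mathlib


/-- `σ` is the hereditarily minimal prehomogeneous (h.m.p.h.) sequence for `x` w.r.t. the
colouring `P` on `X`: `σ(0) = min X`,
`σ(i+1) = min {y ∈ X : y > σ(i) ∧ ∀ j ≤ i, P(σ(j), x) = P(σ(j), y)}`,
and the construction stops once `σ(i) = x`. -/
def IsHMPH {n : ℕ} (X : Finset ℕ) (P : ℕ → ℕ → Fin n) (x : ℕ) (σ : List ℕ) : Prop :=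
  σ ≠ [] ∧
  (σ.getD 0 0 ∈ X ∧ ∀ z ∈ X, σ.getD 0 0 ≤ z) ∧
  σ.getLast? = some x ∧
  (∀ i, i + 1 < σ.length → σ.getD i 0 ≠ x) ∧
  (∀ i, i + 1 < σ.length →
    σ.getD (i + 1) 0 ∈ X ∧ σ.getD i 0 < σ.getD (i + 1) 0 ∧
    (∀ j ≤ i, P (σ.getD j 0) x = P (σ.getD j 0) (σ.getD (i + 1) 0)) ∧
    ∀ y ∈ X, σ.getD i 0 < y →
      (∀ j ≤ i, P (σ.getD j 0) x = P (σ.getD j 0) y) → σ.getD (i + 1) 0 ≤ y)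

namespace CardShortHmphAux

/-- encode a list of digits (shifted by one, little-endian base `n`). -/
def enc {n : ℕ} : List (Fin n) → ℕ
  | [] => 0
  | c :: t => 1 + (c : ℕ) + n * enc t

lemma enc_inj {n : ℕ} : ∀ l1 l2 : List (Fin n), enc l1 = enc l2 → l1 = l2
  | [], [], _ => rfl
  | [], c :: t, h => by simp only [enc] at h; omega
  | c :: t, [], h => by simp only [enc] at h; omega
  | c1 :: t1, c2 :: t2, h => by
    have hn : 0 < n := c1.pos
    simp only [enc] at h
    have h' : (c1 : ℕ) + n * enc t1 = (c2 : ℕ) + n * enc t2 := by omega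
    have hc : (c1 : ℕ) = (c2 : ℕ) := by
      have := congrArg (· % n) h'
      simpa [Nat.add_mul_mod_self_left, Nat.mod_eq_of_lt c1.isLt,
        Nat.mod_eq_of_lt c2.isLt] using this
    have ht : enc t1 = enc t2 := by
      have h2 : n * enc t1 = n * enc t2 := by omega
      exact Nat.eq_of_mul_eq_mul_left hn h2
    rw [Fin.val_inj.mp hc, enc_inj t1 t2 ht]

lemma enc_bound {n : ℕ} (hn : 2 ≤ n) :
    ∀ l : List (Fin n), (n - 1) * enc l + n ≤ n ^ (l.length + 1)
  | [] => by simp [enc]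
  | c :: t => by
    have IH := enc_bound hn t
    obtain ⟨k, rfl⟩ : ∃ k, n = k + 2 := ⟨n - 2, by omega⟩
    have h1 : k + 2 - 1 = k + 1 := by omega
    rw [h1] at IH ⊢
    have hlt : (c : ℕ) < k + 2 := c.isLt
    simp only [enc, List.length_cons]
    have h2 : (k + 2) ^ (t.length + 1 + 1) = (k + 2) * (k + 2) ^ (t.length + 1) := by ring
    rw [h2]
    nlinarith [IH, hlt]

lemma enc_lt {n m : ℕ} (hn : 2 ≤ n) (l : List (Fin n)) (hl : l.length + 1 ≤ m) :
    enc l < n ^ m := by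
  have h1 := enc_bound hn l
  have h2 : n ^ (l.length + 1) ≤ n ^ m := Nat.pow_le_pow_right (by omega) hl
  have h3 : enc l ≤ (n - 1) * enc l := Nat.le_mul_of_pos_left _ (by omega)
  omega

lemma getD_last {σ : List ℕ} {x : ℕ} (_hne : σ ≠ []) (h : σ.getLast? = some x) :
    σ.getD (σ.length - 1) 0 = x := by
  rw [List.getLast?_eq_getElem?] at h
  rw [List.getD_eq_getElem?_getD, h]
  rfl

lemma hmph_ext {n : ℕ} {X : Finset ℕ} {P : ℕ → ℕ → Fin n} {x y : ℕ} {σ τ : List ℕ}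
    (hσ : IsHMPH X P x σ) (hτ : IsHMPH X P y τ) (hlen : σ.length = τ.length)
    (hcol : ∀ j, j + 1 < σ.length → P (σ.getD j 0) x = P (τ.getD j 0) y) :
    ∀ i, i < σ.length → σ.getD i 0 = τ.getD i 0 := by
  intro i
  induction i using Nat.strong_induction_on with
  | _ i IH =>
    intro hi
    match i with
    | 0 =>
      exact le_antisymm (hσ.2.1.2 _ hτ.2.1.1) (hτ.2.1.2 _ hσ.2.1.1)
    | i + 1 =>
      obtain ⟨ha1, ha2, ha3, ha4⟩ := hσ.2.2.2.2 i hi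
      obtain ⟨hb1, hb2, hb3, hb4⟩ := hτ.2.2.2.2 i (hlen ▸ hi)
      have hei : ∀ j ≤ i, σ.getD j 0 = τ.getD j 0 := fun j hj =>
        IH j (by omega) (by omega)
      have hcols : ∀ j ≤ i, P (σ.getD j 0) x = P (τ.getD j 0) y := fun j hj =>
        hcol j (by omega)
      apply le_antisymm
      · apply ha4 _ hb1 ((hei i le_rfl).symm ▸ hb2)
        intro j hj
        exact (hcols j hj).trans ((hb3 j hj).trans (by rw [hei j hj]))
      · apply hb4 _ ha1 ((hei i le_rfl) ▸ ha2)
        intro j hj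
        exact ((hcols j hj).symm).trans ((ha3 j hj).trans (by rw [hei j hj]))

end CardShortHmphAux

open CardShortHmphAux in
/-- Let `n ≥ 2`, let `X ⊆ ℕ` be a finite set and `P : [X]² → n` a colouring.  For any
`m ∈ ℕ`, the number of `x ∈ X` whose h.m.p.h. sequence `σ_x` has length at most `m`
is at most `n^m`. -/
theorem card_short_hmph_le (n : ℕ) (hn : 2 ≤ n) (X : Finset ℕ) (P : ℕ → ℕ → Fin n)
    (m : ℕ) :
    Set.ncard {x | x ∈ X ∧ ∃ σ : List ℕ, IsHMPH X P x σ ∧ σ.length ≤ m} ≤ n ^ m := by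
  classical
  set S : Set ℕ := {x | x ∈ X ∧ ∃ σ : List ℕ, IsHMPH X P x σ ∧ σ.length ≤ m} with hS
  let f : ℕ → ℕ := fun x =>
    if h : ∃ σ : List ℕ, IsHMPH X P x σ ∧ σ.length ≤ m then
      enc (h.choose.dropLast.map (fun s => P s x)) else 0
  -- colour list facts
  have hcl : ∀ (x : ℕ) (h : ∃ σ : List ℕ, IsHMPH X P x σ ∧ σ.length ≤ m),
      (h.choose.dropLast.map (fun s => P s x)).length + 1 = h.choose.length := by
    intro x h
    have hne : h.choose ≠ [] := h.choose_spec.1.1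
    have : 1 ≤ h.choose.length := List.length_pos_iff.mpr hne
    simp only [List.length_map, List.length_dropLast]
    omega
  have hmem : ∀ x ∈ S, f x ∈ Finset.range (n ^ m) := by
    intro x hx
    obtain ⟨hxX, h⟩ := hx
    simp only [f, dif_pos h, Finset.mem_range]
    refine enc_lt hn _ ?_
    rw [hcl x h]
    exact h.choose_spec.2
  have hinj : Set.InjOn f S := by
    intro x hx y hy hfxy
    obtain ⟨hxX, h1⟩ := hx
    obtain ⟨hyX, h2⟩ := hy
    simp only [f, dif_pos h1, dif_pos h2] at hfxy
    have hle := enc_inj _ _ hfxy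
    set σ := h1.choose with hσdef
    set τ := h2.choose with hτdef
    obtain ⟨hσ, hσm⟩ := h1.choose_spec
    obtain ⟨hτ, hτm⟩ := h2.choose_spec
    have hne1 : σ ≠ [] := hσ.1
    have hne2 : τ ≠ [] := hτ.1
    have hp1 : 1 ≤ σ.length := List.length_pos_iff.mpr hne1
    have hp2 : 1 ≤ τ.length := List.length_pos_iff.mpr hne2
    have hlen : σ.length = τ.length := by
      have := congrArg List.length hle
      simp only [List.length_map, List.length_dropLast] at this
      omega
    have hcol : ∀ j, j + 1 < σ.length → P (σ.getD j 0) x = P (τ.getD j 0) y := by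
      intro j hj
      have hjσ : j < σ.dropLast.length := by
        simp only [List.length_dropLast]; omega
      have hjτ : j < τ.dropLast.length := by
        simp only [List.length_dropLast]; omega
      have := congrArg (fun l => l[j]?) hle
      simp only [List.getElem?_map, List.getElem?_eq_getElem hjσ,
        List.getElem?_eq_getElem hjτ, Option.map_some] at this
      have hval : P (σ.dropLast[j]) x = P (τ.dropLast[j]) y := by
        exact Option.some.inj this
      have e1 : σ.dropLast[j] = σ.getD j 0 := by
        rw [List.getElem_dropLast, List.getD_eq_getElem?_getD,
          List.getElem?_eq_getElem (by omega : j < σ.length)]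
        rfl
      have e2 : τ.dropLast[j] = τ.getD j 0 := by
        rw [List.getElem_dropLast, List.getD_eq_getElem?_getD,
          List.getElem?_eq_getElem (by omega : j < τ.length)]
        rfl
      rw [e1, e2] at hval
      exact hval
    have hltσ : σ.length - 1 < σ.length := by omega
    have hext := hmph_ext hσ hτ hlen hcol (σ.length - 1) hltσ
    have ex : σ.getD (σ.length - 1) 0 = x := getD_last hne1 hσ.2.2.1
    have ey : τ.getD (τ.length - 1) 0 = y := getD_last hne2 hτ.2.2.1
    rw [ex, hlen, ey] at hext
    exact hext
  calc S.ncard = (f '' S).ncard := (Set.ncard_image_of_injOn hinj).symm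
    _ ≤ (Finset.range (n ^ m) : Set ℕ).ncard := by
        refine Set.ncard_le_ncard ?_ (Finset.range (n ^ m)).finite_toSet
        rintro _ ⟨x, hx, rfl⟩
        exact hmem x hx
    _ = n ^ m := by rw [Set.ncard_coe_finset, Finset.card_range]
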